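/- arXiv:math/0412170 — 2 statements merged into one kernel-verified Lean document; each statement's English description precedes it below -/
import Mathlib

section
/- Let x = X_1 be the generating operator of the complex group algebra of the free group F_N on N ≥ 1 generators. For all natural numbers k, n, p with p ≤ k and 1 ≤ p ≤ n − 1, one has x^k · X_n = x^{k−p} · ( Σ_{i=0}^{p} binom(p,i)·(2N−1)^i · X_{n+p−2i} ). -/
/-- `Xop N n` is the operator `X_n`: the sum, in the complex group algebra
`ℂ[F_N] = MonoidAlgebra ℂ (FreeGroup (Fin N))`, of the basis elements of all
words `w` whose reduced word has length `n`. Note `Xop N 0 = 1`. -/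
noncomputable def Xop (N n : ℕ) : MonoidAlgebra ℂ (FreeGroup (Fin N)) :=
  ∑ᶠ w ∈ {w : FreeGroup (Fin N) | (FreeGroup.toWord w).length = n},
    MonoidAlgebra.of ℂ (FreeGroup (Fin N)) w

/-- The canonical trace `τ` on `ℂ[F_N]`: the coefficient at the identity. -/
noncomputable def tr {N : ℕ} (a : MonoidAlgebra ℂ (FreeGroup (Fin N))) : ℂ := a.coeff 1

variable {N : ℕ}

lemma finite_len (N n : ℕ) : {w : FreeGroup (Fin N) | (FreeGroup.toWord w).length = n}.Finite := by
  apply Set.Finite.of_finite_image (f := FreeGroup.toWord)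
  · exact (List.finite_length_eq _ n).subset (by rintro l ⟨w, hw, rfl⟩; exact hw)
  · exact fun a _ b _ h => FreeGroup.toWord_injective h

noncomputable def lenF (N n : ℕ) : Finset (FreeGroup (Fin N)) := (finite_len N n).toFinset

lemma mem_lenF {n : ℕ} {w : FreeGroup (Fin N)} : w ∈ lenF N n ↔ w.toWord.length = n := by
  simp [lenF, Set.Finite.mem_toFinset]

lemma Xop_eq (N n : ℕ) : Xop N n = ∑ w ∈ lenF N n, MonoidAlgebra.single w (1:ℂ) := by
  rw [Xop, ← finsum_mem_coe_finset]
  apply finsum_mem_congr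
  · simp [lenF, Set.Finite.coe_toFinset]
  · intro w _; rfl

lemma Xop_apply (N n : ℕ) (w : FreeGroup (Fin N)) :
    (Xop N n).coeff w = if w.toWord.length = n then 1 else 0 := by
  rw [Xop_eq, MonoidAlgebra.coeff_sum, Finset.sum_apply']
  simp [MonoidAlgebra.coeff_single, Finsupp.single_apply, Finset.sum_ite_eq, mem_lenF]

lemma X1_eq (N : ℕ) : Xop N 1 = ∑ s : Fin N × Bool, MonoidAlgebra.single (FreeGroup.mk [s]) (1:ℂ) := by
  rw [Xop_eq]
  refine (Finset.sum_bij (fun (s : Fin N × Bool) _ => FreeGroup.mk [s]) ?_ ?_ ?_ ?_).symm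
  · intro s _
    rw [mem_lenF]
    simp [FreeGroup.toWord_mk, FreeGroup.reduce_singleton]
  · intro s _ t _ h
    have := congrArg FreeGroup.toWord h
    simpa [FreeGroup.toWord_mk, FreeGroup.reduce_singleton] using this
  · intro w hw
    rw [mem_lenF] at hw
    obtain ⟨s, hs⟩ := List.length_eq_one_iff.mp hw
    exact ⟨s, Finset.mem_univ _, by simp only [← hs, FreeGroup.mk_toWord]⟩
  · intro s _; rfl

lemma cons_len (s : Fin N × Bool) (hd : Fin N × Bool) (tl : List (Fin N × Bool))
    (hred : FreeGroup.reduce (hd :: tl) = hd :: tl) :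
    (FreeGroup.mk ((s.1, !s.2) :: hd :: tl)).toWord.length
      = if s = hd then tl.length else tl.length + 2 := by
  rw [FreeGroup.toWord_mk, FreeGroup.reduce.cons, hred]
  dsimp only
  by_cases hs : s = hd
  · subst hs
    rw [if_pos rfl]
    simp
  · rw [if_neg hs, if_neg]
    · simp
    · rintro ⟨h1, h2⟩
      apply hs
      exact Prod.ext h1 (Bool.not_inj h2)

lemma mulX (N n : ℕ) (hn : 2 ≤ n) :
    Xop N 1 * Xop N n = Xop N (n + 1) + ((2 * N - 1 : ℕ) : ℂ) • Xop N (n - 1) := by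
  apply MonoidAlgebra.ext; apply Finsupp.ext; intro y
  rw [X1_eq, Finset.sum_mul, MonoidAlgebra.coeff_sum, Finset.sum_apply']
  have hterm : ∀ s : Fin N × Bool,
      (MonoidAlgebra.single (FreeGroup.mk [s]) (1:ℂ) * Xop N n).coeff y
        = if (FreeGroup.mk ((s.1, !s.2) :: y.toWord)).toWord.length = n then 1 else 0 := by
    intro s
    rw [MonoidAlgebra.coeff_single_mul_apply, one_mul, Xop_apply]
    congr 2
    rw [FreeGroup.inv_mk]
    have h1 : FreeGroup.invRev [s] = [(s.1, !s.2)] := by simp [FreeGroup.invRev]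
    conv_lhs => rw [h1, ← FreeGroup.mk_toWord (x := y), FreeGroup.mul_mk]
    rfl
  simp_rw [hterm]
  rw [MonoidAlgebra.coeff_add, Finsupp.add_apply, MonoidAlgebra.coeff_smul, Finsupp.smul_apply, Xop_apply, Xop_apply]
  rcases h : y.toWord with _ | ⟨hd, tl⟩
  · rw [Finset.sum_eq_zero]
    · simp only [h, List.length_nil]
      rw [if_neg (by omega), if_neg (by omega)]
      simp
    · intro s _
      rw [if_neg]
      simp only [FreeGroup.toWord_mk, FreeGroup.reduce_singleton, List.length_cons,
        List.length_nil]
      omega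
  · have hred : FreeGroup.reduce (hd :: tl) = hd :: tl := by
      rw [← h]; exact FreeGroup.reduce_toWord y
    simp_rw [cons_len _ _ _ hred]
    classical
    rw [Fintype.sum_eq_add_sum_compl hd]
    rw [if_pos rfl]
    rw [Finset.sum_congr rfl (fun s hs => by
      rw [if_neg (show ¬ s = hd by simpa using Finset.mem_compl.mp hs)])]
    rw [Finset.sum_const, Finset.card_compl, Finset.card_singleton]
    have hcard : Fintype.card (Fin N × Bool) = 2 * N := by simp [mul_comm]
    rw [hcard]
    simp only [List.length_cons]
    have e1 : (tl.length = n) ↔ (tl.length + 1 = n + 1) := by omega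
    have e2 : (tl.length + 2 = n) ↔ (tl.length + 1 = n - 1) := by omega
    rw [if_congr e1 rfl rfl, if_congr e2 rfl rfl]
    by_cases h1 : tl.length + 1 = n + 1 <;> by_cases h2 : tl.length + 1 = n - 1 <;>
      simp [h1, h2] <;> omega

lemma key (N p n : ℕ) (hpn : p + 1 ≤ n) :
    (Xop N 1) ^ p * Xop N n
      = ∑ i ∈ Finset.range (p + 1),
          ((p.choose i * (2 * N - 1) ^ i : ℕ) : ℂ) • Xop N (n + p - 2 * i) := by
  induction p with
  | zero => simp
  | succ p ih =>
    have h1 : p + 1 ≤ n := by omega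
    rw [pow_succ', mul_assoc, ih h1, Finset.mul_sum]
    have hx : ∀ i ∈ Finset.range (p + 1),
        Xop N 1 * (((p.choose i * (2 * N - 1) ^ i : ℕ) : ℂ) • Xop N (n + p - 2 * i))
          = ((p.choose i * (2 * N - 1) ^ i : ℕ) : ℂ) • Xop N (n + (p + 1) - 2 * i)
            + ((p.choose i * (2 * N - 1) ^ (i + 1) : ℕ) : ℂ) • Xop N (n + (p + 1) - 2 * (i + 1)) := by
      intro i hi
      rw [Finset.mem_range] at hi
      rw [mul_smul_comm, mulX N (n + p - 2 * i) (by omega)]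
      have e1 : n + p - 2 * i + 1 = n + (p + 1) - 2 * i := by omega
      have e2 : n + p - 2 * i - 1 = n + (p + 1) - 2 * (i + 1) := by omega
      rw [e1, e2, smul_add, smul_smul]
      congr 2
      push_cast [pow_succ]
      ring
    rw [Finset.sum_congr rfl hx, Finset.sum_add_distrib]
    -- RHS manipulation
    rw [Finset.sum_range_succ' _ (p + 1)]
    have hg : ∀ i ∈ Finset.range (p + 1),
        (((p + 1).choose (i + 1) * (2 * N - 1) ^ (i + 1) : ℕ) : ℂ)
            • Xop N (n + (p + 1) - 2 * (i + 1))
          = ((p.choose (i + 1) * (2 * N - 1) ^ (i + 1) : ℕ) : ℂ)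
              • Xop N (n + (p + 1) - 2 * (i + 1))
            + ((p.choose i * (2 * N - 1) ^ (i + 1) : ℕ) : ℂ)
              • Xop N (n + (p + 1) - 2 * (i + 1)) := by
      intro i hi
      rw [← add_smul]
      congr 1
      rw [Nat.choose_succ_succ']
      push_cast
      ring
    rw [Finset.sum_congr rfl hg, Finset.sum_add_distrib]
    have hT1 : ∑ i ∈ Finset.range (p + 1),
          ((p.choose i * (2 * N - 1) ^ i : ℕ) : ℂ) • Xop N (n + (p + 1) - 2 * i)
        = (∑ i ∈ Finset.range (p + 1),
            ((p.choose (i + 1) * (2 * N - 1) ^ (i + 1) : ℕ) : ℂ)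
              • Xop N (n + (p + 1) - 2 * (i + 1)))
          + (((p + 1).choose 0 * (2 * N - 1) ^ 0 : ℕ) : ℂ) • Xop N (n + (p + 1) - 2 * 0) := by
      rw [Finset.sum_range_succ' _ p, Finset.sum_range_succ]
      simp [Nat.choose_succ_self]
    rw [hT1]
    abel

theorem stmt_2 (N : ℕ) (hN : 1 ≤ N) (k n p : ℕ)
    (hpk : p ≤ k) (hp1 : 1 ≤ p) (hpn : p ≤ n - 1) :
    (Xop N 1) ^ k * Xop N n =
      (Xop N 1) ^ (k - p) *
        ∑ i ∈ Finset.range (p + 1),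
          (p.choose i * (2 * N - 1) ^ i : ℕ) • Xop N (n + p - 2 * i) := by
  have hpn' : p + 1 ≤ n := by omega
  calc (Xop N 1) ^ k * Xop N n
      = (Xop N 1) ^ (k - p) * ((Xop N 1) ^ p * Xop N n) := by
        rw [← mul_assoc, ← pow_add]
        congr 2
        omega
    _ = _ := by
        rw [key N p n hpn']
        congr 1
        refine Finset.sum_congr rfl fun i _ => ?_
        rw [Nat.cast_smul_eq_nsmul]
end

section
/- Let x = X_1 be the generating operator of the complex group algebra of the free group F_N on N ≥ 1 generators. For every n ≥ 1, x^n · X_n = Σ_{i=0}^{n−1} binom(n,i)·(2N−1)^i · X_{2n−2i} + 2N·(2N−1)^{n−1} · 1, where 1 is the identity of the algebra. -/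
open FreeGroup MonoidAlgebra

variable {N : ℕ}

noncomputable instance : DecidableEq (FreeGroup (Fin N)) := Classical.decEq _

/-- Finset of elements with reduced-word length n. -/
noncomputable def Sset (N n : ℕ) : Finset (FreeGroup (Fin N)) :=
  (Set.Finite.preimage (f := FreeGroup.toWord) (FreeGroup.toWord_injective.injOn)
    (List.finite_length_eq _ n)).toFinset

lemma mem_Sset {n : ℕ} {w : FreeGroup (Fin N)} : w ∈ Sset N n ↔ w.toWord.length = n := by
  simp [Sset]

lemma Xop_eq_s4 (N n : ℕ) :
    (∑ᶠ w ∈ {w : FreeGroup (Fin N) | (FreeGroup.toWord w).length = n},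
      MonoidAlgebra.of ℂ (FreeGroup (Fin N)) w) = ∑ w ∈ Sset N n, MonoidAlgebra.of ℂ _ w := by
  rw [← finsum_mem_coe_finset]
  congr 1
  ext w
  simp [mem_Sset]

/-- single letter as a group element -/
def gen (N : ℕ) (p : Fin N × Bool) : FreeGroup (Fin N) := FreeGroup.mk [p]

lemma toWord_gen (p : Fin N × Bool) : (gen N p).toWord = [p] := by
  simp [gen, toWord_mk, reduce_singleton]

lemma gen_inv (p : Fin N × Bool) : (gen N p)⁻¹ = gen N (p.1, !p.2) := by
  simp [gen, FreeGroup.inv_mk, invRev]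

lemma toWord_gen_mul (p : Fin N × Bool) (w : FreeGroup (Fin N)) :
    (gen N p * w).toWord = reduce (p :: w.toWord) := by
  conv_lhs => rw [← FreeGroup.mk_toWord (x := w)]
  rw [gen, FreeGroup.mul_mk, toWord_mk]
  rfl

lemma toWord_gen_mul_nocancel (p : Fin N × Bool) (w : FreeGroup (Fin N))
    (h : w.toWord.head? ≠ some (p.1, !p.2)) :
    (gen N p * w).toWord = p :: w.toWord := by
  rw [toWord_gen_mul, reduce.cons, FreeGroup.reduce_toWord]
  cases hw : w.toWord with
  | nil => rfl
  | cons hd tl =>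
    rw [hw] at h
    simp only [List.head?_cons, ne_eq, Option.some_inj] at h
    have : ¬ (p.1 = hd.1 ∧ p.2 = !hd.2) := by
      rintro ⟨h1, h2⟩
      exact h (Prod.ext h1.symm (by simp [h2]))
    simp [this]

lemma toWord_gen_mul_cancel (p : Fin N × Bool) (w : FreeGroup (Fin N))
    (h : w.toWord.head? = some (p.1, !p.2)) :
    (gen N p * w).toWord = w.toWord.tail := by
  rw [toWord_gen_mul, reduce.cons, FreeGroup.reduce_toWord]
  cases hw : w.toWord with
  | nil => rw [hw] at h; simp at h
  | cons hd tl =>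
    rw [hw] at h
    simp only [List.head?_cons, Option.some_inj] at h
    subst h
    simp

/-- a reduced word has no adjacent cancelling pair at the front -/
lemma head_tail_ne {w : FreeGroup (Fin N)} {a : Fin N × Bool} {t : List (Fin N × Bool)}
    (hw : w.toWord = a :: t) : t.head? ≠ some (a.1, !a.2) := by
  intro h
  cases t with
  | nil => simp at h
  | cons b t' =>
    simp only [List.head?_cons, Option.some_inj] at h
    subst h
    have : reduce w.toWord = ([] : List (Fin N × Bool)) ++ (a.1, a.2) :: (a.1, !a.2) :: t' := by
      rw [FreeGroup.reduce_toWord, hw]; rfl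
    exact reduce.not this

noncomputable def XF (N n : ℕ) : MonoidAlgebra ℂ (FreeGroup (Fin N)) :=
  ∑ w ∈ Sset N n, MonoidAlgebra.of ℂ _ w

lemma gen_injective : Function.Injective (gen N) := fun p q h => by
  have := congrArg FreeGroup.toWord h
  rw [toWord_gen, toWord_gen] at this
  exact List.singleton_injective this

lemma Sset_one : Sset N 1 = Finset.image (gen N) Finset.univ := by
  ext w
  simp only [mem_Sset, Finset.mem_image, Finset.mem_univ, true_and]
  constructor
  · intro h
    obtain ⟨a, ha⟩ := List.length_eq_one_iff.mp h
    exact ⟨a, by rw [← FreeGroup.mk_toWord (x := w), ha]; rfl⟩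
  · rintro ⟨a, rfl⟩
    rw [toWord_gen]; rfl

lemma Sset_zero : Sset N 0 = {1} := by
  ext w
  simp [mem_Sset, List.length_eq_zero_iff, FreeGroup.toWord_eq_nil_iff]

lemma XF_zero : XF N 0 = 1 := by
  simp [XF, Sset_zero, MonoidAlgebra.of_apply, MonoidAlgebra.one_def]

lemma mul_expand (m : ℕ) :
    XF N 1 * XF N m =
      ∑ q ∈ Finset.univ ×ˢ Sset N m, MonoidAlgebra.of ℂ _ (gen N q.1 * q.2) := by
  rw [XF, XF, Sset_one, Finset.sum_image (fun a _ b _ h => gen_injective h),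
    Finset.sum_mul_sum, ← Finset.sum_product']
  exact Finset.sum_congr rfl fun q _ => (_root_.map_mul (MonoidAlgebra.of ℂ _) _ _).symm

open Finset in
lemma part1 (hN : 1 ≤ N) (m : ℕ) :
    ∑ q ∈ (Finset.univ ×ˢ Sset N m).filter
        (fun q => ¬ q.2.toWord.head? = some (q.1.1, !q.1.2)),
      MonoidAlgebra.of ℂ _ (gen N q.1 * q.2) = XF N (m + 1) := by
  rw [XF]
  set d : Fin N × Bool := (⟨0, hN⟩, true) with hd
  refine Finset.sum_bij'
    (fun q _ => gen N q.1 * q.2)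
    (fun v _ => (v.toWord.headD d, (gen N (v.toWord.headD d))⁻¹ * v))
    ?_ ?_ ?_ ?_ ?_
  · -- hi
    intro q hq
    rw [Finset.mem_filter, Finset.mem_product] at hq
    rw [mem_Sset, toWord_gen_mul_nocancel _ _ hq.2, List.length_cons, mem_Sset.mp hq.1.2]
  · -- hj
    intro v hv
    obtain ⟨hd0, tl, hw⟩ : ∃ hd0 tl, v.toWord = hd0 :: tl := by
      cases h : v.toWord with
      | nil =>
        exfalso; have := mem_Sset.mp hv; rw [h] at this; simp at this
      | cons a b => exact ⟨a, b, rfl⟩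
    have hhead : v.toWord.headD d = hd0 := by rw [hw]; rfl
    have hcan : v.toWord.head? = some ((hd0.1, !hd0.2).1, !(hd0.1, !hd0.2).2) := by
      rw [hw]; simp
    have htw : ((gen N (v.toWord.headD d))⁻¹ * v).toWord = tl := by
      rw [hhead, gen_inv, toWord_gen_mul_cancel _ _ hcan, hw]; rfl
    rw [Finset.mem_filter, Finset.mem_product]
    refine ⟨⟨Finset.mem_univ _, ?_⟩, ?_⟩
    · rw [mem_Sset, htw]
      have := mem_Sset.mp hv
      rw [hw] at this
      simpa using this
    · show ¬ ((gen N (v.toWord.headD d))⁻¹ * v).toWord.head? =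
        some ((v.toWord.headD d).1, !(v.toWord.headD d).2)
      rw [htw, hhead]
      simpa using head_tail_ne hw
  · -- left_inv
    intro q hq
    rw [Finset.mem_filter, Finset.mem_product] at hq
    have ht : (gen N q.1 * q.2).toWord = q.1 :: q.2.toWord :=
      toWord_gen_mul_nocancel _ _ hq.2
    have hh : (gen N q.1 * q.2).toWord.headD d = q.1 := by rw [ht]; rfl
    show ((gen N q.1 * q.2).toWord.headD d,
      (gen N ((gen N q.1 * q.2).toWord.headD d))⁻¹ * (gen N q.1 * q.2)) = q
    rw [hh, inv_mul_cancel_left]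
  · -- right_inv
    intro v hv
    exact mul_inv_cancel_left _ _
  · intro q hq; rfl

open Finset in
lemma part2 (m : ℕ) (hm : 1 ≤ m) :
    ∑ q ∈ (Finset.univ ×ˢ Sset N m).filter
        (fun q => q.2.toWord.head? = some (q.1.1, !q.1.2)),
      MonoidAlgebra.of ℂ _ (gen N q.1 * q.2) =
    ∑ q ∈ (Finset.univ ×ˢ Sset N (m - 1)).filter
        (fun q : (Fin N × Bool) × FreeGroup (Fin N) => ¬ q.2.toWord.head? = some q.1),
      MonoidAlgebra.of ℂ _ q.2 := by
  refine Finset.sum_bij'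
    (fun q _ => (q.1, gen N q.1 * q.2))
    (fun q _ => (q.1, (gen N q.1)⁻¹ * q.2))
    ?_ ?_ ?_ ?_ ?_
  · -- hi
    intro q hq
    rw [Finset.mem_filter, Finset.mem_product] at hq
    obtain ⟨⟨-, hq2⟩, hc⟩ := hq
    obtain ⟨tl, hw⟩ : ∃ tl, q.2.toWord = (q.1.1, !q.1.2) :: tl := by
      cases h : q.2.toWord with
      | nil => rw [h] at hc; simp at hc
      | cons a b =>
        rw [h] at hc; simp only [List.head?_cons, Option.some_inj] at hc
        exact ⟨b, by rw [hc]⟩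
    have htw : (gen N q.1 * q.2).toWord = tl := by
      rw [toWord_gen_mul_cancel _ _ hc, hw]; rfl
    rw [Finset.mem_filter, Finset.mem_product]
    refine ⟨⟨Finset.mem_univ _, ?_⟩, ?_⟩
    · rw [mem_Sset, htw]
      have := mem_Sset.mp hq2
      rw [hw] at this
      simp at this
      omega
    · show ¬ (gen N q.1 * q.2).toWord.head? = some q.1
      rw [htw]
      have := head_tail_ne hw
      simpa using this
  · -- hj
    intro q hq
    rw [Finset.mem_filter, Finset.mem_product] at hq
    obtain ⟨⟨-, hq2⟩, hc⟩ := hq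
    have hnc : ¬ q.2.toWord.head? = some ((q.1.1, !q.1.2).1, !(q.1.1, !q.1.2).2) := by
      simpa using hc
    have htw : ((gen N q.1)⁻¹ * q.2).toWord = (q.1.1, !q.1.2) :: q.2.toWord := by
      rw [gen_inv, toWord_gen_mul_nocancel _ _ hnc]
    rw [Finset.mem_filter, Finset.mem_product]
    refine ⟨⟨Finset.mem_univ _, ?_⟩, ?_⟩
    · rw [mem_Sset, htw, List.length_cons, mem_Sset.mp hq2]
      omega
    · show ((gen N q.1)⁻¹ * q.2).toWord.head? = some (q.1.1, !q.1.2)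
      rw [htw]; rfl
  · intro q hq
    show (q.1, (gen N q.1)⁻¹ * (gen N q.1 * q.2)) = q
    rw [inv_mul_cancel_left]
  · intro q hq
    show (q.1, gen N q.1 * ((gen N q.1)⁻¹ * q.2)) = q
    rw [mul_inv_cancel_left]
  · intro q hq
    rfl

open Finset in
lemma count_sum (k : ℕ) :
    ∑ q ∈ (Finset.univ ×ˢ Sset N k).filter
        (fun q : (Fin N × Bool) × FreeGroup (Fin N) => ¬ q.2.toWord.head? = some q.1),
      MonoidAlgebra.of ℂ _ q.2
    = ∑ v ∈ Sset N k,
        ((Finset.univ.filter fun p : Fin N × Bool => ¬ v.toWord.head? = some p).card)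
          • MonoidAlgebra.of ℂ _ v := by
  rw [Finset.sum_finset_product_right _ (Sset N k)
      (fun v => Finset.univ.filter fun p => ¬ v.toWord.head? = some p)
      (by intro p; simp [Finset.mem_filter, Finset.mem_product, and_comm, and_assoc])]
  exact Finset.sum_congr rfl fun v _ => by simp [Finset.sum_const]

open Finset in
lemma card_filter_none {v : FreeGroup (Fin N)} (h : v.toWord = []) :
    (Finset.univ.filter fun p : Fin N × Bool => ¬ v.toWord.head? = some p).card = 2 * N := by
  rw [h]
  simp [Finset.filter_true_of_mem, Finset.card_univ, Nat.mul_comm]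

open Finset in
lemma card_filter_some {v : FreeGroup (Fin N)} {a : Fin N × Bool} {t : List (Fin N × Bool)}
    (h : v.toWord = a :: t) :
    (Finset.univ.filter fun p : Fin N × Bool => ¬ v.toWord.head? = some p).card = 2 * N - 1 := by
  rw [h]
  have : (Finset.univ.filter fun p : Fin N × Bool => ¬ (a :: t).head? = some p)
      = Finset.univ.erase a := by
    ext p
    simp [eq_comm]
  rw [this, Finset.card_erase_of_mem (Finset.mem_univ _), Finset.card_univ]
  simp [Nat.mul_comm]

lemma keyA (hN : 1 ≤ N) (m : ℕ) (hm : 2 ≤ m) :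
    XF N 1 * XF N m = XF N (m + 1) + (2 * N - 1) • XF N (m - 1) := by
  rw [mul_expand m, ← Finset.sum_filter_add_sum_filter_not _
      (fun q : (Fin N × Bool) × FreeGroup (Fin N) => q.2.toWord.head? = some (q.1.1, !q.1.2)),
    part1 hN m, part2 m (by omega), count_sum]
  rw [add_comm]
  congr 1
  rw [XF, Finset.smul_sum]
  refine Finset.sum_congr rfl fun v hv => ?_
  obtain ⟨a, t, hw⟩ : ∃ a t, v.toWord = a :: t := by
    cases h : v.toWord with
    | nil =>
      exfalso
      have := mem_Sset.mp hv
      rw [h] at this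
      simp at this
      omega
    | cons a b => exact ⟨a, b, rfl⟩
  rw [card_filter_some hw]

lemma keyB (hN : 1 ≤ N) :
    XF N 1 * XF N 1 = XF N 2 + (2 * N) • (1 : MonoidAlgebra ℂ (FreeGroup (Fin N))) := by
  rw [mul_expand 1, ← Finset.sum_filter_add_sum_filter_not _
      (fun q : (Fin N × Bool) × FreeGroup (Fin N) => q.2.toWord.head? = some (q.1.1, !q.1.2)),
    part1 hN 1, part2 1 le_rfl, count_sum]
  rw [add_comm]
  congr 1
  rw [Sset_zero]
  rw [Finset.sum_singleton, card_filter_none (by simp [FreeGroup.toWord_one])]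
  simp [MonoidAlgebra.one_def]

lemma pascal_sum' {M : Type*} [AddCommMonoid M] (n q : ℕ) (F : ℕ → M) :
    ∑ i ∈ Finset.range (n+1), ((n+1).choose i * q^i) • F i
    = ∑ i ∈ Finset.range (n+1), (n.choose i * q^i) • F i
      + ∑ i ∈ Finset.range n, (n.choose i * q^(i+1)) • F (i+1) := by
  rw [Finset.sum_range_succ' (fun i => ((n+1).choose i * q^i) • F i) n,
      Finset.sum_range_succ' (fun i => (n.choose i * q^i) • F i) n]
  simp only [Nat.choose_succ_succ, add_mul, add_smul, Finset.sum_add_distrib,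
    Nat.choose_zero_right, pow_zero]
  abel

lemma pascal_sum {M : Type*} [AddCommMonoid M] (n q : ℕ) (F : ℕ → M) :
    ∑ i ∈ Finset.range (n+2), ((n+1).choose i * q^i) • F i
    = ∑ i ∈ Finset.range (n+1), (n.choose i * q^i) • F i
      + ∑ i ∈ Finset.range (n+1), (n.choose i * q^(i+1)) • F (i+1) := by
  rw [Finset.sum_range_succ (fun i => ((n+1).choose i * q^i) • F i) (n+1),
      Finset.sum_range_succ (fun i => (n.choose i * q^(i+1)) • F (i+1)) n,
      pascal_sum']
  simp only [Nat.choose_self, one_mul]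
  abel

lemma claimA (hN : 1 ≤ N) : ∀ n m : ℕ, n + 1 ≤ m →
    XF N 1 ^ n * XF N m
      = ∑ i ∈ Finset.range (n+1),
          (n.choose i * (2*N-1)^i) • XF N (m + n - 2*i) := by
  intro n
  induction n with
  | zero => intro m hm; simp
  | succ n ih =>
    intro m hm
    have h2 : 2 ≤ m := by omega
    rw [pow_succ, mul_assoc, keyA hN m h2, mul_add, ih (m+1) (by omega),
      mul_smul_comm, ih (m-1) (by omega), Finset.smul_sum]
    have e1 : ∀ i ∈ Finset.range (n+1),
        (n.choose i * (2*N-1)^i) • XF N (m + 1 + n - 2*i)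
          = (n.choose i * (2*N-1)^i) • XF N (m + (n+1) - 2*i) := by
      intro i _
      congr 2
      omega
    have e2 : ∀ i ∈ Finset.range (n+1),
        (2*N-1) • ((n.choose i * (2*N-1)^i) • XF N (m - 1 + n - 2*i))
          = (n.choose i * (2*N-1)^(i+1)) • XF N (m + (n+1) - 2*(i+1)) := by
      intro i _
      rw [smul_smul]
      have : (2*N-1) * (n.choose i * (2*N-1)^i) = n.choose i * (2*N-1)^(i+1) := by ring
      rw [this]
      congr 2
      omega
    rw [Finset.sum_congr rfl e1, Finset.sum_congr rfl e2,
      ← pascal_sum n (2*N-1) (fun j => XF N (m + (n+1) - 2*j))]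

lemma mainXF (hN : 1 ≤ N) : ∀ n : ℕ, 1 ≤ n →
    XF N 1 ^ n * XF N n
      = ∑ i ∈ Finset.range n, (n.choose i * (2*N-1)^i) • XF N (2*n - 2*i)
        + (2*N*(2*N-1)^(n-1)) • (1 : MonoidAlgebra ℂ (FreeGroup (Fin N))) := by
  intro n hn
  induction n, hn using Nat.le_induction with
  | base =>
    rw [pow_one, keyB hN]
    simp
  | succ n hn ih =>
    have hA : XF N 1 * XF N (n+1) = XF N (n+2) + (2*N-1) • XF N n := by
      have := keyA hN (n+1) (by omega)
      simpa using this
    rw [pow_succ, mul_assoc, hA, mul_add, claimA hN n (n+2) (by omega),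
      mul_smul_comm, ih, smul_add, Finset.smul_sum]
    have e1 : ∀ i ∈ Finset.range (n+1),
        (n.choose i * (2*N-1)^i) • XF N (n + 2 + n - 2*i)
          = (n.choose i * (2*N-1)^i) • XF N (2*(n+1) - 2*i) := by
      intro i _; congr 2; omega
    have e2 : ∀ i ∈ Finset.range n,
        (2*N-1) • ((n.choose i * (2*N-1)^i) • XF N (2*n - 2*i))
          = (n.choose i * (2*N-1)^(i+1)) • XF N (2*(n+1) - 2*(i+1)) := by
      intro i _
      rw [smul_smul]
      have : (2*N-1) * (n.choose i * (2*N-1)^i) = n.choose i * (2*N-1)^(i+1) := by ring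
      rw [this]
      congr 2
      omega
    have e3 : (2*N-1) • ((2*N*(2*N-1)^(n-1)) • (1 : MonoidAlgebra ℂ (FreeGroup (Fin N))))
        = (2*N*(2*N-1)^((n+1)-1)) • 1 := by
      rw [smul_smul]
      congr 1
      have h : (n-1)+1 = n := by omega
      calc (2*N-1) * (2*N*(2*N-1)^(n-1)) = 2*N*((2*N-1)^(n-1)*(2*N-1)) := by ring
        _ = 2*N*(2*N-1)^((n+1)-1) := by rw [← pow_succ, h]; simp
    rw [Finset.sum_congr rfl e1, Finset.sum_congr rfl e2, e3,
      ← add_assoc, ← pascal_sum' n (2*N-1) (fun j => XF N (2*(n+1) - 2*j))]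

lemma Xop_eq_XF (N k : ℕ) : Xop N k = XF N k := by
  rw [Xop, Xop_eq_s4, XF]

theorem stmt_4 (N : ℕ) (hN : 1 ≤ N) (n : ℕ) (hn : 1 ≤ n) :
    (Xop N 1) ^ n * Xop N n =
      (∑ i ∈ Finset.range n,
        (n.choose i * (2 * N - 1) ^ i : ℕ) • Xop N (2 * n - 2 * i))
      + (2 * N * (2 * N - 1) ^ (n - 1) : ℕ) • 1 := by
  simp only [Xop_eq_XF]
  exact mainXF hN n hn
end
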